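/- The polynomial G = (p2*q1 - p1*q2)^2 + (2*q1^2*q2^2 + 2*q2^4 + 2*b*q2^2 + p2^2)*(a-b) is a first integral of the Vanhaecke system: the Poisson bracket {H, G} vanishes identically, where H = (p1^2+p2^2)/2 + (q1^2+q2^2)^2 + a*q1^2 + b*q2^2. -/

import Mathlib

/-- `G` is a first integral of the Vanhaecke system: the Poisson bracket
`{H,G}` vanishes identically. -/
theorem vanhaecke_G_first_integral (a b : ℝ) (H G : ℝ → ℝ → ℝ → ℝ → ℝ)
    (hH : ∀ q1 q2 p1 p2, H q1 q2 p1 p2 =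
      (p1^2+p2^2)/2 + (q1^2+q2^2)^2 + a*q1^2 + b*q2^2)
    (hG : ∀ q1 q2 p1 p2, G q1 q2 p1 p2 =
      (p2*q1 - p1*q2)^2 + (2*q1^2*q2^2 + 2*q2^4 + 2*b*q2^2 + p2^2)*(a-b)) :
    ∀ q1 q2 p1 p2 : ℝ,
      deriv (fun x => H q1 q2 x p2) p1 * deriv (fun x => G x q2 p1 p2) q1
      + deriv (fun x => H q1 q2 p1 x) p2 * deriv (fun x => G q1 x p1 p2) q2
      - deriv (fun x => H x q2 p1 p2) q1 * deriv (fun x => G q1 q2 x p2) p1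
      - deriv (fun x => H q1 x p1 p2) q2 * deriv (fun x => G q1 q2 p1 x) p2 = 0 := by
  intro q1 q2 p1 p2
  have e1 : (fun x => H q1 q2 x p2) =
      (fun x : ℝ => (x^2+p2^2)/2 + (q1^2+q2^2)^2 + a*q1^2 + b*q2^2) :=
    funext fun x => hH q1 q2 x p2
  have e2 : (fun x => H q1 q2 p1 x) =
      (fun x : ℝ => (p1^2+x^2)/2 + (q1^2+q2^2)^2 + a*q1^2 + b*q2^2) :=
    funext fun x => hH q1 q2 p1 x
  have e3 : (fun x => H x q2 p1 p2) =
      (fun x : ℝ => (p1^2+p2^2)/2 + (x^2+q2^2)^2 + a*x^2 + b*q2^2) :=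
    funext fun x => hH x q2 p1 p2
  have e4 : (fun x => H q1 x p1 p2) =
      (fun x : ℝ => (p1^2+p2^2)/2 + (q1^2+x^2)^2 + a*q1^2 + b*x^2) :=
    funext fun x => hH q1 x p1 p2
  have f1 : (fun x => G x q2 p1 p2) =
      (fun x : ℝ => (p2*x - p1*q2)^2 + (2*x^2*q2^2 + 2*q2^4 + 2*b*q2^2 + p2^2)*(a-b)) :=
    funext fun x => hG x q2 p1 p2
  have f2 : (fun x => G q1 x p1 p2) =
      (fun x : ℝ => (p2*q1 - p1*x)^2 + (2*q1^2*x^2 + 2*x^4 + 2*b*x^2 + p2^2)*(a-b)) :=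
    funext fun x => hG q1 x p1 p2
  have f3 : (fun x => G q1 q2 x p2) =
      (fun x : ℝ => (p2*q1 - x*q2)^2 + (2*q1^2*q2^2 + 2*q2^4 + 2*b*q2^2 + p2^2)*(a-b)) :=
    funext fun x => hG q1 q2 x p2
  have f4 : (fun x => G q1 q2 p1 x) =
      (fun x : ℝ => (x*q1 - p1*q2)^2 + (2*q1^2*q2^2 + 2*q2^4 + 2*b*q2^2 + x^2)*(a-b)) :=
    funext fun x => hG q1 q2 p1 x
  have d1 := ((((((hasDerivAt_pow 2 p1).add_const (p2^2)).div_const 2).add_const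
      ((q1^2+q2^2)^2)).add_const (a*q1^2)).add_const (b*q2^2)).deriv
  have d2 := ((((((hasDerivAt_pow 2 p2).const_add (p1^2)).div_const 2).add_const
      ((q1^2+q2^2)^2)).add_const (a*q1^2)).add_const (b*q2^2)).deriv
  have t3 := ((hasDerivAt_pow 2 q1).add_const (q2^2)).pow 2
  have d3 : deriv (fun x : ℝ => (p1^2+p2^2)/2 + (x^2+q2^2)^2 + a*x^2 + b*q2^2) q1 = _ := (((t3.const_add ((p1^2+p2^2)/2)).add
      ((hasDerivAt_pow 2 q1).const_mul a)).add_const (b*q2^2)).deriv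
  have t4 := ((hasDerivAt_pow 2 q2).const_add (q1^2)).pow 2
  have d4 : deriv (fun x : ℝ => (p1^2+p2^2)/2 + (q1^2+x^2)^2 + a*q1^2 + b*x^2) q2 = _ := (((t4.const_add ((p1^2+p2^2)/2)).add_const (a*q1^2)).add
      ((hasDerivAt_pow 2 q2).const_mul b)).deriv
  have g1 : deriv (fun x : ℝ => (p2*x - p1*q2)^2 + (2*x^2*q2^2 + 2*q2^4 + 2*b*q2^2 + p2^2)*(a-b)) q1 = _ := (((((hasDerivAt_id' q1).const_mul p2).sub_const (p1*q2)).pow 2).add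
      (((((((hasDerivAt_pow 2 q1).const_mul 2).mul_const (q2^2)).add_const
        (2*q2^4)).add_const (2*b*q2^2)).add_const (p2^2)).mul_const (a-b))).deriv
  have g2 : deriv (fun x : ℝ => (p2*q1 - p1*x)^2 + (2*q1^2*x^2 + 2*x^4 + 2*b*x^2 + p2^2)*(a-b)) q2 = _ := (((((hasDerivAt_id' q2).const_mul p1).const_sub (p2*q1)).pow 2).add
      ((((((hasDerivAt_pow 2 q2).const_mul (2*q1^2)).add
        ((hasDerivAt_pow 4 q2).const_mul 2)).add
        ((hasDerivAt_pow 2 q2).const_mul (2*b))).add_const (p2^2)).mul_const (a-b))).deriv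
  have u3 := ((((hasDerivAt_id' p1).mul_const q2).const_sub (p2*q1)).pow 2).add_const
      ((2*q1^2*q2^2 + 2*q2^4 + 2*b*q2^2 + p2^2)*(a-b))
  have g3 : deriv (fun x : ℝ => (p2*q1 - x*q2)^2 + (2*q1^2*q2^2 + 2*q2^4 + 2*b*q2^2 + p2^2)*(a-b)) p1 = _ := u3.deriv
  have u4 := (((hasDerivAt_id' p2).mul_const q1).sub_const (p1*q2)).pow 2
  have v4 := ((hasDerivAt_pow 2 p2).const_add (2*q1^2*q2^2 + 2*q2^4 + 2*b*q2^2)).mul_const (a-b)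
  have g4 : deriv (fun x : ℝ => (x*q1 - p1*q2)^2 + (2*q1^2*q2^2 + 2*q2^4 + 2*b*q2^2 + x^2)*(a-b)) p2 = _ := (u4.add v4).deriv
  rw [e1, e2, e3, e4, f1, f2, f3, f4, d1, d2, d3, d4, g1, g2, g3, g4]
  push_cast
  ring
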